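/- Let C ⊆ L^Φ be a monotone, positively homogeneous, additive, order closed set such that for each X ∈ L^Φ there exists k ∈ ℝ with X − k·1 ∉ C. Then ρ(X) = inf{m ∈ ℝ : X + m·1 ∈ C} defines a coherent risk measure on L^Φ whose sublevel sets satisfy {ρ ≤ m} = C − m·1; in particular each {ρ ≤ m} is order closed and ρ has the Fatou property. -/

import Mathlib

open MeasureTheory Filter Set

noncomputable section

/-- An Orlicz function: convex, increasing, vanishing at 0. -/
structure OrliczFunction where
  toFun : ℝ → ℝ
  convexOn : ConvexOn ℝ (Set.Ici (0:ℝ)) toFun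
  monoOn : MonotoneOn toFun (Set.Ici (0:ℝ))
  map_zero : toFun 0 = 0

namespace Orlicz

variable {Ω : Type*} [MeasurableSpace Ω]

/-- Membership in the Orlicz space `L^Φ`. -/
def MemLp (Φ : OrliczFunction) (μ : Measure Ω) (X : Ω → ℝ) : Prop :=
  AEStronglyMeasurable X μ ∧
    ∃ c : ℝ, 0 < c ∧ Integrable (fun ω => Φ.toFun (|X ω| / c)) μ

/-- Membership in the Orlicz heart `H^Φ`. -/
def MemHeart (Φ : OrliczFunction) (μ : Measure Ω) (X : Ω → ℝ) : Prop :=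
  AEStronglyMeasurable X μ ∧
    ∀ c : ℝ, 0 < c → Integrable (fun ω => Φ.toFun (|X ω| / c)) μ

/-- The Luxemburg norm. -/
def luxNorm (Φ : OrliczFunction) (μ : Measure Ω) (X : Ω → ℝ) : ℝ :=
  sInf {c : ℝ | 0 < c ∧ Integrable (fun ω => Φ.toFun (|X ω| / c)) μ ∧
    ∫ ω, Φ.toFun (|X ω| / c) ∂μ ≤ 1}

/-- The dual pairing `E[XY]`. -/
def pairing (μ : Measure Ω) (X Y : Ω → ℝ) : ℝ := ∫ ω, X ω * Y ω ∂μ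

/-- Order convergence in `L^Φ`: a.s. convergence together with order boundedness. -/
def OrderConvTo (Φ : OrliczFunction) (μ : Measure Ω) (X : ℕ → Ω → ℝ) (L : Ω → ℝ) : Prop :=
  (∀ᵐ ω ∂μ, Tendsto (fun n => X n ω) atTop (nhds (L ω))) ∧
    ∃ Z : Ω → ℝ, MemLp Φ μ Z ∧ ∀ n, ∀ᵐ ω ∂μ, |X n ω| ≤ Z ω

/-- A set is order closed if it contains the order limits of its order convergent sequences. -/
def OrderClosed (Φ : OrliczFunction) (μ : Measure Ω) (C : Set (Ω → ℝ)) : Prop :=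
  ∀ (X : ℕ → Ω → ℝ) (L : Ω → ℝ), (∀ n, X n ∈ C) → MemLp Φ μ L →
    OrderConvTo Φ μ X L → L ∈ C

/-- The order closure of a set in `L^Φ`. -/
def orderClosure (Φ : OrliczFunction) (μ : Measure Ω) (C : Set (Ω → ℝ)) : Set (Ω → ℝ) :=
  {L | MemLp Φ μ L ∧ ∃ X : ℕ → Ω → ℝ, (∀ n, X n ∈ C) ∧ OrderConvTo Φ μ X L}

/-- Closure in the weak topology induced by pairing against functions satisfying `dual`,
within the space of functions satisfying `mem`. -/
def wClosure (mem dual : (Ω → ℝ) → Prop) (μ : Measure Ω) (C : Set (Ω → ℝ)) :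
    Set (Ω → ℝ) :=
  {X | mem X ∧ ∀ ε : ℝ, 0 < ε → ∀ F : Finset (Ω → ℝ), (∀ Y ∈ F, dual Y) →
    ∃ Z ∈ C, ∀ Y ∈ F, |pairing μ Z Y - pairing μ X Y| < ε}

/-- Weak closedness. -/
def WClosed (mem dual : (Ω → ℝ) → Prop) (μ : Measure Ω) (C : Set (Ω → ℝ)) : Prop :=
  wClosure mem dual μ C ⊆ C

/-- Weak sequential closedness. -/
def WSeqClosed (mem dual : (Ω → ℝ) → Prop) (μ : Measure Ω) (C : Set (Ω → ℝ)) : Prop :=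
  ∀ (X : ℕ → Ω → ℝ) (L : Ω → ℝ), (∀ n, X n ∈ C) → mem L →
    (∀ Y, dual Y → Tendsto (fun n => pairing μ (X n) Y) atTop (nhds (pairing μ L Y))) →
    L ∈ C

/-- The Δ₂-condition: `Φ(2t) < k·Φ(t)` for all large `t`. -/
def Delta2 (Φ : OrliczFunction) : Prop :=
  ∃ t₀ : ℝ, 0 < t₀ ∧ ∃ k : ℝ, ∀ t : ℝ, t₀ ≤ t → Φ.toFun (2 * t) < k * Φ.toFun t

/-- `(Φ,Ψ)` is a conjugate pair of Orlicz functions, with `Φ` superlinear and positive. -/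
def IsConjugate (Φ Ψ : OrliczFunction) : Prop :=
  (∀ s : ℝ, 0 ≤ s →
      Ψ.toFun s = sSup ((fun t => t * s - Φ.toFun t) '' Set.Ici (0:ℝ))) ∧
    Tendsto (fun t => Φ.toFun t / t) atTop atTop ∧ (∀ t : ℝ, 0 < t → 0 < Φ.toFun t)

/-- Fenchel conjugate of a functional on `L^Φ`. -/
def rhoStar (Φ : OrliczFunction) (μ : Measure Ω) (ρ : (Ω → ℝ) → EReal) (Y : Ω → ℝ) :
    EReal :=
  sSup {v : EReal | ∃ X : Ω → ℝ, MemLp Φ μ X ∧ v = ((pairing μ X Y : ℝ) : EReal) - ρ X}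

/-- A coherent risk measure on `L^Φ`: proper, subadditive, monotone, cash additive and
positively homogeneous. -/
def Coherent (Φ : OrliczFunction) (μ : Measure Ω) (ρ : (Ω → ℝ) → EReal) : Prop :=
  (∀ X, ρ X ≠ ⊥) ∧
    (∃ X, MemLp Φ μ X ∧ ρ X ≠ ⊤) ∧
    (∀ X Y, MemLp Φ μ X → MemLp Φ μ Y → ρ (X + Y) ≤ ρ X + ρ Y) ∧
    (∀ X Y, MemLp Φ μ X → MemLp Φ μ Y → (∀ᵐ ω ∂μ, Y ω ≤ X ω) → ρ X ≤ ρ Y) ∧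
    (∀ (X : Ω → ℝ) (m : ℝ), MemLp Φ μ X →
      ρ (fun ω => X ω + m) = ρ X - ((m : ℝ) : EReal)) ∧
    (∀ (X : Ω → ℝ) (l : ℝ), 0 < l → MemLp Φ μ X → ρ (l • X) = ((l : ℝ) : EReal) * ρ X)

/-- The Fatou property on `L^Φ`. -/
def Fatou (Φ : OrliczFunction) (μ : Measure Ω) (ρ : (Ω → ℝ) → EReal) : Prop :=
  ∀ (X : ℕ → Ω → ℝ) (L : Ω → ℝ), (∀ n, MemLp Φ μ (X n)) → MemLp Φ μ L →
    OrderConvTo Φ μ X L → ρ L ≤ liminf (fun n => ρ (X n)) atTop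

/-- Boundedly a.s. closed subsets of the Orlicz heart. -/
def BddAEClosed (Φ : OrliczFunction) (μ : Measure Ω) (C : Set (Ω → ℝ)) : Prop :=
  ∀ (S : ℕ → Ω → ℝ) (L : Ω → ℝ), (∀ n, S n ∈ C) →
    (∃ M : ℝ, ∀ n, luxNorm Φ μ (S n) ≤ M) → MemHeart Φ μ L →
    (∀ᵐ ω ∂μ, Tendsto (fun n => S n ω) atTop (nhds (L ω))) → L ∈ C

end Orlicz


section Helpers

open Orlicz

variable {Ω : Type*} [MeasurableSpace Ω]

lemma phiNonneg (Φ : OrliczFunction) {t : ℝ} (ht : 0 ≤ t) : 0 ≤ Φ.toFun t := by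
  have h := Φ.monoOn (Set.mem_Ici.2 le_rfl) (Set.mem_Ici.2 ht) ht
  rw [Φ.map_zero] at h
  exact h

lemma phiMonoExt (Φ : OrliczFunction) : Monotone (fun t : ℝ => Φ.toFun (max t 0)) := by
  intro a b hab
  exact Φ.monoOn (Set.mem_Ici.2 (le_max_right _ _)) (Set.mem_Ici.2 (le_max_right _ _))
    (max_le_max hab le_rfl)

lemma aesm_phi_comp (Φ : OrliczFunction) {μ : Measure Ω} {f : Ω → ℝ}
    (hf : AEStronglyMeasurable f μ) {c : ℝ} (hc : 0 < c) :
    AEStronglyMeasurable (fun ω => Φ.toFun (|f ω| / c)) μ := by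
  have h1 : AEMeasurable (fun ω => |f ω| / c) μ :=
    (measurable_abs.comp_aemeasurable hf.aemeasurable).div_const c
  have h2 := ((phiMonoExt Φ).measurable.comp_aemeasurable h1).aestronglyMeasurable
  refine h2.congr (Filter.Eventually.of_forall fun ω => ?_)
  simp only [Function.comp_apply]
  rw [max_eq_left (div_nonneg (abs_nonneg _) hc.le)]

lemma memLp_add' (Φ : OrliczFunction) {μ : Measure Ω} {X Y : Ω → ℝ}
    (hX : MemLp Φ μ X) (hY : MemLp Φ μ Y) : MemLp Φ μ (fun ω => X ω + Y ω) := by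
  obtain ⟨hXm, c, hc, hXi⟩ := hX
  obtain ⟨hYm, d, hd, hYi⟩ := hY
  have he : (0:ℝ) < c + d := by linarith
  refine ⟨hXm.add hYm, c + d, he, ?_⟩
  refine ((hXi.const_mul (c/(c+d))).add (hYi.const_mul (d/(c+d)))).mono'
    (aesm_phi_comp Φ (hXm.add hYm) he) (Filter.Eventually.of_forall fun ω => ?_)
  have h0 : (0:ℝ) ≤ |X ω + Y ω| / (c + d) := div_nonneg (abs_nonneg _) he.le
  rw [Real.norm_eq_abs, abs_of_nonneg (phiNonneg Φ h0)]
  simp only [Pi.add_apply]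
  have step1 : Φ.toFun (|X ω + Y ω| / (c + d)) ≤ Φ.toFun ((|X ω| + |Y ω|) / (c + d)) := by
    refine Φ.monoOn (Set.mem_Ici.2 h0) (Set.mem_Ici.2 (by positivity)) ?_
    gcongr
    exact abs_add_le _ _
  have harg : (|X ω| + |Y ω|) / (c + d)
      = (c/(c+d)) • (|X ω| / c) + (d/(c+d)) • (|Y ω| / d) := by
    simp only [smul_eq_mul]
    field_simp
  have step2 := Φ.convexOn.2 (x := |X ω| / c) (y := |Y ω| / d)
    (Set.mem_Ici.2 (div_nonneg (abs_nonneg _) hc.le))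
    (Set.mem_Ici.2 (div_nonneg (abs_nonneg _) hd.le))
    (div_nonneg hc.le he.le) (div_nonneg hd.le he.le)
    (by field_simp : c/(c+d) + d/(c+d) = 1)
  rw [← harg] at step2
  simp only [smul_eq_mul] at step2
  linarith

lemma memLp_const' (Φ : OrliczFunction) (μ : Measure Ω) [IsFiniteMeasure μ] (k : ℝ) :
    MemLp Φ μ (fun _ => k) :=
  ⟨aestronglyMeasurable_const, 1, one_pos, integrable_const _⟩

lemma memLp_abs' (Φ : OrliczFunction) {μ : Measure Ω} {X : Ω → ℝ}
    (hX : MemLp Φ μ X) : MemLp Φ μ (fun ω => |X ω|) := by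
  obtain ⟨hm, c, hc, hi⟩ := hX
  refine ⟨(measurable_abs.comp_aemeasurable hm.aemeasurable).aestronglyMeasurable, c, hc, ?_⟩
  simpa only [abs_abs] using hi

lemma memLp_smul' (Φ : OrliczFunction) {μ : Measure Ω} {X : Ω → ℝ} {l : ℝ}
    (hl : 0 < l) (hX : MemLp Φ μ X) : MemLp Φ μ (l • X) := by
  obtain ⟨hm, c, hc, hi⟩ := hX
  refine ⟨hm.const_smul l, l * c, by positivity, ?_⟩
  have heq : (fun ω => Φ.toFun (|(l • X) ω| / (l * c))) = fun ω => Φ.toFun (|X ω| / c) := by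
    funext ω
    congr 1
    rw [Pi.smul_apply, smul_eq_mul, abs_mul, abs_of_pos hl, mul_div_mul_left _ _ hl.ne']
  rw [heq]
  exact hi

end Helpers

open Orlicz
/-- From a monotone, positively homogeneous, additive, order closed set `C ⊆ L^Φ`
(nonempty, and such that every `X` escapes `C` after subtracting a large constant),
the functional `ρ(X) = inf{m : X + m·1 ∈ C}` is a coherent risk measure whose sublevel
sets are the translates `C − m·1`; in particular they are order closed and `ρ` has the
Fatou property. -/
theorem riskMeasure_from_acceptance_set {Ω : Type*} [MeasurableSpace Ω]
    (μ : Measure Ω) [IsProbabilityMeasure μ] (Φ : OrliczFunction)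
    (C : Set (Ω → ℝ)) (hCsub : ∀ X ∈ C, MemLp Φ μ X) (hne : C.Nonempty)
    (hmono : ∀ X Y : Ω → ℝ, MemLp Φ μ X → Y ∈ C → (∀ᵐ ω ∂μ, Y ω ≤ X ω) → X ∈ C)
    (hhom : ∀ l : ℝ, 0 ≤ l → ∀ X ∈ C, l • X ∈ C)
    (hadd : ∀ X ∈ C, ∀ Y ∈ C, X + Y ∈ C)
    (hocl : OrderClosed Φ μ C)
    (hshift : ∀ X, MemLp Φ μ X → ∃ k : ℝ, (fun ω => X ω - k) ∉ C) :
    let ρ : (Ω → ℝ) → EReal :=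
      fun X => sInf {v : EReal | ∃ m : ℝ, v = ((m : ℝ) : EReal) ∧
        (fun ω => X ω + m) ∈ C}
    Coherent Φ μ ρ ∧
      (∀ m : ℝ, {X | MemLp Φ μ X ∧ ρ X ≤ ((m : ℝ) : EReal)} =
        {X | MemLp Φ μ X ∧ (fun ω => X ω + m) ∈ C}) ∧
      (∀ m : ℝ, OrderClosed Φ μ {X | MemLp Φ μ X ∧ ρ X ≤ ((m : ℝ) : EReal)}) ∧
      Fatou Φ μ ρ := by
  intro ρ
  have hρ : ∀ X : Ω → ℝ, ρ X = sInf {v : EReal | ∃ m : ℝ, v = ((m : ℝ) : EReal) ∧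
      (fun ω => X ω + m) ∈ C} := fun X => rfl
  -- membership gives MemLp
  have hCmem : ∀ (X : Ω → ℝ) (m : ℝ), (fun ω => X ω + m) ∈ C → MemLp Φ μ X := by
    intro X m h
    have h2 : X = fun ω => (X ω + m) + (-m) := by funext ω; ring
    rw [h2]
    exact memLp_add' Φ (hCsub _ h) (memLp_const' Φ μ (-m))
  -- upward closedness
  have hup : ∀ (X : Ω → ℝ) (m n : ℝ), m ≤ n → (fun ω => X ω + m) ∈ C →
      (fun ω => X ω + n) ∈ C := by
    intro X m n hmn h
    exact hmono _ _ (memLp_add' Φ (hCmem X m h) (memLp_const' Φ μ n)) h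
      (Filter.Eventually.of_forall fun ω => by linarith)
  -- never bottom
  have hnb : ∀ X : Ω → ℝ, ρ X ≠ ⊥ := by
    intro X
    by_cases hX : MemLp Φ μ X
    · obtain ⟨k, hk⟩ := hshift X hX
      have hle : ((-k : ℝ) : EReal) ≤ ρ X := by
        rw [hρ X]
        apply le_sInf
        rintro v ⟨m, rfl, hm⟩
        rw [EReal.coe_le_coe_iff]
        by_contra h
        push_neg at h
        have h2 := hup X m (-k) h.le hm
        exact hk (by simpa [sub_eq_add_neg] using h2)
      intro hbot
      rw [hbot] at hle
      exact ((EReal.bot_lt_coe (-k)).not_ge hle)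
    · have hempty : {v : EReal | ∃ m : ℝ, v = ((m : ℝ) : EReal) ∧
          (fun ω => X ω + m) ∈ C} = ∅ := by
        ext v
        simp only [Set.mem_setOf_eq, Set.mem_empty_iff_false, iff_false, not_exists]
        rintro m ⟨rfl, hm⟩
        exact hX (hCmem X m hm)
      rw [hρ X, hempty, sInf_empty]
      simp
  -- the key sublevel characterization
  have hKL : ∀ X : Ω → ℝ, MemLp Φ μ X → ∀ m : ℝ,
      (ρ X ≤ ((m : ℝ) : EReal) ↔ (fun ω => X ω + m) ∈ C) := by
    intro X hX m
    constructor
    · intro h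
      have hseq : ∀ n : ℕ, (fun ω => X ω + (m + 1 / (n + 1))) ∈ C := by
        intro n
        have hpos : (0:ℝ) < 1 / ((n:ℝ) + 1) := by positivity
        have hlt : ρ X < (((m + 1 / ((n:ℝ) + 1)) : ℝ) : EReal) :=
          lt_of_le_of_lt h (EReal.coe_lt_coe_iff.2 (by linarith))
        rw [hρ X, sInf_lt_iff] at hlt
        obtain ⟨v, ⟨s, rfl, hs⟩, hvlt⟩ := hlt
        exact hup X s _ (EReal.coe_lt_coe_iff.1 hvlt).le hs
      have hLlim : (fun ω => X ω + m) ∈ C := by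
        apply hocl (fun n => fun ω => X ω + (m + 1 / (n + 1))) (fun ω => X ω + m) hseq
          (memLp_add' Φ hX (memLp_const' Φ μ m))
        constructor
        · refine Filter.Eventually.of_forall fun ω => ?_
          have h1 : Tendsto (fun n : ℕ => (1:ℝ) / (n + 1)) atTop (nhds 0) :=
            tendsto_one_div_add_atTop_nhds_zero_nat
          have h2 := (tendsto_const_nhds (x := X ω + m) (f := atTop (α := ℕ))).add h1
          simpa [add_assoc] using h2
        · refine ⟨fun ω => |X ω| + (|m| + 1),
            memLp_add' Φ (memLp_abs' Φ hX) (memLp_const' Φ μ (|m| + 1)),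
            fun n => Filter.Eventually.of_forall fun ω => ?_⟩
          have hpos : (0:ℝ) < 1 / ((n:ℝ) + 1) := by positivity
          have hle1 : (1:ℝ) / ((n:ℝ) + 1) ≤ 1 := by
            rw [div_le_one (by positivity)]
            simp [Nat.cast_nonneg]
          calc |X ω + (m + 1 / ((n:ℝ) + 1))| ≤ |X ω| + |m + 1 / ((n:ℝ) + 1)| := abs_add_le _ _
            _ ≤ |X ω| + (|m| + |1 / ((n:ℝ) + 1)|) := by
                have := abs_add_le m (1 / ((n:ℝ) + 1)); linarith
            _ ≤ |X ω| + (|m| + 1) := by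
                rw [abs_of_pos hpos]; linarith
      exact hLlim
    · intro h
      rw [hρ X]
      exact sInf_le ⟨m, rfl, h⟩
  refine ⟨⟨hnb, ?_, ?_, ?_, ?_, ?_⟩, ?_, ?_, ?_⟩
  · -- proper
    obtain ⟨X₀, hX₀⟩ := hne
    refine ⟨X₀, hCsub _ hX₀, ?_⟩
    have hle : ρ X₀ ≤ ((0 : ℝ) : EReal) := by
      rw [hρ X₀]
      exact sInf_le ⟨0, rfl, by simpa using hX₀⟩
    intro htop
    rw [htop] at hle
    exact (EReal.coe_ne_top 0) (top_le_iff.1 hle)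
  · -- subadditive
    intro X Y hX hY
    by_cases h1 : ρ X = ⊤
    · rw [h1, EReal.top_add_of_ne_bot (hnb Y)]; exact le_top
    by_cases h2 : ρ Y = ⊤
    · rw [h2, EReal.add_top_of_ne_bot (hnb X)]; exact le_top
    obtain ⟨a, ha⟩ : ∃ a : ℝ, ρ X = ((a : ℝ) : EReal) := ⟨_, (EReal.coe_toReal h1 (hnb X)).symm⟩
    obtain ⟨b, hb⟩ : ∃ b : ℝ, ρ Y = ((b : ℝ) : EReal) := ⟨_, (EReal.coe_toReal h2 (hnb Y)).symm⟩
    have hXa : (fun ω => X ω + a) ∈ C := (hKL X hX a).1 (le_of_eq ha)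
    have hYb : (fun ω => Y ω + b) ∈ C := (hKL Y hY b).1 (le_of_eq hb)
    have hsum := hadd _ hXa _ hYb
    have hXY : MemLp Φ μ (X + Y) := memLp_add' Φ hX hY
    have hmem : (fun ω => (X + Y) ω + (a + b)) ∈ C := by
      have heq : (fun ω => (X + Y) ω + (a + b))
          = (fun ω => X ω + a) + (fun ω => Y ω + b) := by
        funext ω; simp only [Pi.add_apply]; ring
      rw [heq]; exact hsum
    have hfin := (hKL (X + Y) hXY (a + b)).2 hmem
    rw [ha, hb, ← EReal.coe_add]
    exact hfin
  · -- monotone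
    intro X Y hX hY hle
    rw [hρ X, hρ Y]
    apply sInf_le_sInf
    rintro v ⟨m, rfl, hm⟩
    refine ⟨m, rfl, hmono _ _ (memLp_add' Φ hX (memLp_const' Φ μ m)) hm ?_⟩
    exact hle.mono fun ω h => by linarith
  · -- cash additivity
    intro X m hX
    have hXm : MemLp Φ μ (fun ω => X ω + m) := memLp_add' Φ hX (memLp_const' Φ μ m)
    by_cases htop : ρ X = ⊤
    · have hSempty : ∀ n : ℝ, (fun ω => X ω + n) ∉ C := by
        intro n hn
        have h2 : ρ X ≤ ((n : ℝ) : EReal) := by rw [hρ X]; exact sInf_le ⟨n, rfl, hn⟩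
        rw [htop] at h2
        exact (EReal.coe_ne_top n) (top_le_iff.1 h2)
      have hempty : {v : EReal | ∃ n : ℝ, v = ((n : ℝ) : EReal) ∧
          (fun ω => (X ω + m) + n) ∈ C} = ∅ := by
        ext v
        simp only [Set.mem_setOf_eq, Set.mem_empty_iff_false, iff_false, not_exists]
        rintro n ⟨rfl, hn⟩
        have heq : (fun ω => X ω + (m + n)) = fun ω => (X ω + m) + n := by funext ω; ring
        exact hSempty (m + n) (by rw [heq]; exact hn)
      rw [hρ (fun ω => X ω + m), htop, EReal.top_sub_coe]
      simpa using congrArg sInf hempty |>.trans sInf_empty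
    · obtain ⟨a, ha⟩ : ∃ a : ℝ, ρ X = ((a : ℝ) : EReal) :=
        ⟨_, (EReal.coe_toReal htop (hnb X)).symm⟩
      apply le_antisymm
      · have hXa : (fun ω => X ω + a) ∈ C := (hKL X hX a).1 (le_of_eq ha)
        have h1 : (fun ω => (X ω + m) + (a - m)) ∈ C := by
          have heq : (fun ω => (X ω + m) + (a - m)) = fun ω => X ω + a := by funext ω; ring
          rw [heq]; exact hXa
        have h2 := (hKL _ hXm (a - m)).2 h1
        rw [ha, ← EReal.coe_sub]
        exact h2
      · by_cases ht2 : ρ (fun ω => X ω + m) = ⊤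
        · rw [ht2]; exact le_top
        obtain ⟨b, hb⟩ : ∃ b : ℝ, ρ (fun ω => X ω + m) = ((b : ℝ) : EReal) :=
          ⟨_, (EReal.coe_toReal ht2 (hnb _)).symm⟩
        have h1 : (fun ω => (X ω + m) + b) ∈ C := (hKL _ hXm b).1 (le_of_eq hb)
        have h2 : (fun ω => X ω + (m + b)) ∈ C := by
          have heq : (fun ω => X ω + (m + b)) = fun ω => (X ω + m) + b := by funext ω; ring
          rw [heq]; exact h1
        have h3 : ρ X ≤ (((m + b) : ℝ) : EReal) := by
          rw [hρ X]; exact sInf_le ⟨m + b, rfl, h2⟩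
        rw [ha] at h3
        rw [ha, hb, ← EReal.coe_sub, EReal.coe_le_coe_iff]
        have := EReal.coe_le_coe_iff.1 h3
        linarith
  · -- positive homogeneity
    intro X l hl hX
    have hlX : MemLp Φ μ (l • X) := memLp_smul' Φ hl hX
    by_cases htop : ρ X = ⊤
    · have hSempty : ∀ n : ℝ, (fun ω => X ω + n) ∉ C := by
        intro n hn
        have h2 : ρ X ≤ ((n : ℝ) : EReal) := by rw [hρ X]; exact sInf_le ⟨n, rfl, hn⟩
        rw [htop] at h2
        exact (EReal.coe_ne_top n) (top_le_iff.1 h2)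
      have hempty : {v : EReal | ∃ n : ℝ, v = ((n : ℝ) : EReal) ∧
          (fun ω => (l • X) ω + n) ∈ C} = ∅ := by
        ext v
        simp only [Set.mem_setOf_eq, Set.mem_empty_iff_false, iff_false, not_exists]
        rintro n ⟨rfl, hn⟩
        have h4 := hhom l⁻¹ (by positivity) _ hn
        have heq : l⁻¹ • (fun ω => (l • X) ω + n) = fun ω => X ω + l⁻¹ * n := by
          funext ω
          simp only [Pi.smul_apply, smul_eq_mul]
          field_simp
        rw [heq] at h4
        exact hSempty (l⁻¹ * n) h4
      rw [hρ (l • X), htop]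
      rw [hempty, sInf_empty, EReal.mul_top_of_pos (EReal.coe_pos.2 hl)]
    · obtain ⟨a, ha⟩ : ∃ a : ℝ, ρ X = ((a : ℝ) : EReal) :=
        ⟨_, (EReal.coe_toReal htop (hnb X)).symm⟩
      apply le_antisymm
      · have hXa : (fun ω => X ω + a) ∈ C := (hKL X hX a).1 (le_of_eq ha)
        have h1 := hhom l hl.le _ hXa
        have heq : l • (fun ω => X ω + a) = fun ω => (l • X) ω + l * a := by
          funext ω
          simp only [Pi.smul_apply, smul_eq_mul]
          ring
        rw [heq] at h1
        have h2 := (hKL _ hlX (l * a)).2 h1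
        rw [ha, ← EReal.coe_mul]
        exact h2
      · by_cases ht2 : ρ (l • X) = ⊤
        · rw [ht2]; exact le_top
        obtain ⟨b, hb⟩ : ∃ b : ℝ, ρ (l • X) = ((b : ℝ) : EReal) :=
          ⟨_, (EReal.coe_toReal ht2 (hnb _)).symm⟩
        have h1 : (fun ω => (l • X) ω + b) ∈ C := (hKL _ hlX b).1 (le_of_eq hb)
        have h4 := hhom l⁻¹ (by positivity) _ h1
        have heq : l⁻¹ • (fun ω => (l • X) ω + b) = fun ω => X ω + l⁻¹ * b := by
          funext ω
          simp only [Pi.smul_apply, smul_eq_mul]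
          field_simp
        rw [heq] at h4
        have h3 : ρ X ≤ ((l⁻¹ * b : ℝ) : EReal) := by
          rw [hρ X]; exact sInf_le ⟨l⁻¹ * b, rfl, h4⟩
        rw [ha] at h3
        rw [ha, hb, ← EReal.coe_mul, EReal.coe_le_coe_iff]
        have h5 := EReal.coe_le_coe_iff.1 h3
        calc l * a ≤ l * (l⁻¹ * b) := by
              exact mul_le_mul_of_nonneg_left h5 hl.le
          _ = b := by field_simp
  · -- sublevel sets
    intro m
    ext X
    simp only [Set.mem_setOf_eq]
    exact and_congr_right fun hX => hKL X hX m
  · -- order closedness of sublevel sets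
    intro m X L hXn hL hconv
    refine ⟨hL, ?_⟩
    have h1 : ∀ n, (fun ω => X n ω + m) ∈ C := fun n => (hKL (X n) (hXn n).1 m).1 (hXn n).2
    obtain ⟨hae, Z, hZ, hdom⟩ := hconv
    have h2 : (fun ω => L ω + m) ∈ C := by
      apply hocl (fun n => fun ω => X n ω + m) _ h1 (memLp_add' Φ hL (memLp_const' Φ μ m))
      constructor
      · exact hae.mono fun ω h => h.add_const m
      · refine ⟨fun ω => Z ω + |m|, memLp_add' Φ hZ (memLp_const' Φ μ (|m|)),
          fun n => (hdom n).mono fun ω h => ?_⟩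
        calc |X n ω + m| ≤ |X n ω| + |m| := abs_add_le _ _
          _ ≤ Z ω + |m| := by linarith
    exact (hKL L hL m).2 h2
  · -- Fatou
    intro X L hX hL hconv
    by_contra hcon
    push_neg at hcon
    obtain ⟨y, hy1, hy2⟩ := EReal.exists_between_coe_real hcon
    have hfreq : ∃ᶠ n in atTop, ρ (X n) < ((y : ℝ) : EReal) :=
      frequently_lt_of_liminf_lt (by isBoundedDefault) hy1
    obtain ⟨φ, hφ, hφ2⟩ := extraction_of_frequently_atTop hfreq
    have h1 : ∀ k, (fun ω => X (φ k) ω + y) ∈ C :=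
      fun k => (hKL _ (hX _) y).1 (hφ2 k).le
    obtain ⟨hae, Z, hZ, hdom⟩ := hconv
    have h2 : (fun ω => L ω + y) ∈ C := by
      apply hocl (fun k => fun ω => X (φ k) ω + y) _ h1
        (memLp_add' Φ hL (memLp_const' Φ μ y))
      constructor
      · exact hae.mono fun ω h => (h.comp hφ.tendsto_atTop).add_const y
      · exact ⟨fun ω => Z ω + |y|, memLp_add' Φ hZ (memLp_const' Φ μ (|y|)),
          fun k => (hdom (φ k)).mono fun ω h => by
            calc |X (φ k) ω + y| ≤ |X (φ k) ω| + |y| := abs_add_le _ _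
              _ ≤ Z ω + |y| := by linarith⟩
    have h3 := (hKL L hL y).2 h2
    exact hy2.not_ge h3
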